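/- Let A be an abelian symmetric monoidal category whose tensor is right-exact in each variable, let F be a ⊗-flat object, and let f : 𝟙 → F be a morphism. Define B₀ to be the class of objects M of A such that f^{⊗n} ⊗ id_M = 0 for some n ≥ 1. Then B₀ is closed under extensions: if 0 → M₁ → M₂ → M₃ → 0 is exact with M₁, M₃ ∈ B₀ (say f^{⊗n₁} ⊗ M₁ = 0 and f^{⊗n₃} ⊗ M₃ = 0), then f^{⊗(n₁+n₃)} ⊗ M₂ = 0. -/

import Mathlib

open CategoryTheory CategoryTheory.Limits CategoryTheory.MonoidalCategory
  CategoryTheory.Pretriangulated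

namespace Balmer

universe w v u v₂ u₂ v₃ u₃ v₄ u₄

variable {C : Type u} [Category.{v} C]

/-- An object is finitely presented if its coYoneda functor preserves filtered colimits. -/
def IsFP (X : C) : Prop :=
  ∀ (J : Type v) [SmallCategory J] [IsFiltered J],
    Nonempty (PreservesColimitsOfShape J (coyoneda.obj (Opposite.op X)))

section Monoidal
variable [MonoidalCategory C]

/-- `n`-fold tensor power of an object. -/
def tpow (x : C) : ℕ → C
  | 0 => 𝟙_ C
  | n + 1 => x ⊗ tpow x n

/-- `n`-fold tensor power of a morphism. -/
def tpowHom {x y : C} (f : x ⟶ y) : ∀ n, tpow x n ⟶ tpow y n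
  | 0 => 𝟙 _
  | n + 1 => f ⊗ₘ tpowHom f n

/-- `n`-fold tensor power of a morphism out of the unit, as a morphism out of the unit. -/
def upow {z : C} (g : 𝟙_ C ⟶ z) : ∀ n, 𝟙_ C ⟶ tpow z n
  | 0 => 𝟙 _
  | n + 1 => (λ_ (𝟙_ C)).inv ≫ (g ⊗ₘ upow g n)

/-- A ⊗-multiplicative class of objects: contains the unit and is closed under `⊗`. -/
def IsTensorMultiplicative (S : Set C) : Prop :=
  𝟙_ C ∈ S ∧ ∀ ⦃a⦄, a ∈ S → ∀ ⦃b⦄, b ∈ S → (a ⊗ b) ∈ S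

end Monoidal

section SerrePlain
variable [Abelian C]

/-- A Serre subcategory (as a class of objects): contains the zeros and is closed under
subobjects, quotients and extensions. -/
def IsSerre (B : Set C) : Prop :=
  (∀ X : C, IsZero X → X ∈ B) ∧
  (∀ ⦃X Y : C⦄ (i : X ⟶ Y), Mono i → Y ∈ B → X ∈ B) ∧
  (∀ ⦃X Y : C⦄ (p : X ⟶ Y), Epi p → X ∈ B → Y ∈ B) ∧
  (∀ S : ShortComplex C, S.ShortExact → S.X₁ ∈ B → S.X₃ ∈ B → S.X₂ ∈ B)

end SerrePlain

section SerrePlain2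
variable [Abelian C]

/-- A Serre subcategory closed under (small) coproducts (no tensor). -/
def IsLocalizingSub (L : Set C) : Prop :=
  IsSerre L ∧ ∀ (J : Type v) (g : J → C) [HasCoproduct g], (∀ j, g j ∈ L) → (∐ g) ∈ L

/-- The localizing subcategory generated by a class of objects (no tensor). -/
def LocSubGen (S : Set C) : Set C :=
  {M | ∀ L : Set C, IsLocalizingSub L → S ⊆ L → M ∈ L}

end SerrePlain2

section Serre
variable [Abelian C] [MonoidalCategory C]

/-- A Serre ⊗-ideal: a Serre subcategory closed under tensoring with arbitrary objects. -/
def IsSerreTensorIdeal (B : Set C) : Prop :=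
  IsSerre B ∧ ∀ (X : C) ⦃M : C⦄, M ∈ B → (X ⊗ M) ∈ B

/-- A maximal proper Serre ⊗-ideal. -/
def IsMaxSerreTensorIdeal (B : Set C) : Prop :=
  IsSerreTensorIdeal B ∧ 𝟙_ C ∉ B ∧
    ∀ B' : Set C, IsSerreTensorIdeal B' → 𝟙_ C ∉ B' → B ⊆ B' → B' = B

/-- The Serre ⊗-ideal generated by a class of objects. -/
def SerreTensorGen (S : Set C) : Set C :=
  {M | ∀ L : Set C, IsSerreTensorIdeal L → S ⊆ L → M ∈ L}

/-- A localizing ⊗-ideal: a Serre ⊗-ideal closed under (small) coproducts. -/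
def IsLocalizingTensorIdeal (L : Set C) : Prop :=
  IsSerreTensorIdeal L ∧
    ∀ (J : Type v) (g : J → C) [HasCoproduct g], (∀ j, g j ∈ L) → (∐ g) ∈ L

/-- The localizing ⊗-ideal generated by a class of objects. -/
def LocTensorGen (S : Set C) : Set C :=
  {M | ∀ L : Set C, IsLocalizingTensorIdeal L → S ⊆ L → M ∈ L}

/-- A Serre ⊗-ideal of the full (abelian, monoidal) subcategory of objects in `P`
(e.g. `P` = finitely presented objects). -/
def IsSerreTensorIdealIn (P B : Set C) : Prop :=
  B ⊆ P ∧
  (∀ X : C, IsZero X → X ∈ P → X ∈ B) ∧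
  (∀ ⦃X Y : C⦄ (i : X ⟶ Y), Mono i → X ∈ P → Y ∈ B → X ∈ B) ∧
  (∀ ⦃X Y : C⦄ (p : X ⟶ Y), Epi p → Y ∈ P → X ∈ B → Y ∈ B) ∧
  (∀ S : ShortComplex C, S.ShortExact → S.X₂ ∈ P → S.X₁ ∈ B → S.X₃ ∈ B → S.X₂ ∈ B) ∧
  (∀ ⦃X : C⦄, X ∈ P → ∀ ⦃M : C⦄, M ∈ B → (X ⊗ M) ∈ B)

/-- A maximal proper Serre ⊗-ideal of the full subcategory of objects in `P`. -/
def IsMaxSerreTensorIdealIn (P B : Set C) : Prop :=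
  IsSerreTensorIdealIn P B ∧ 𝟙_ C ∉ B ∧
    ∀ B' : Set C, IsSerreTensorIdealIn P B' → 𝟙_ C ∉ B' → B ⊆ B' → B' = B

end Serre

section Tri
variable [Preadditive C] [HasZeroObject C] [HasShift C ℤ]
  [∀ n : ℤ, (shiftFunctor C n).Additive] [Pretriangulated C] [MonoidalCategory C]

/-- A thick ⊗-ideal of a tensor-triangulated category. -/
def IsThickTensorIdeal (P : Set C) : Prop :=
  (∀ ⦃x y : C⦄, (x ≅ y) → x ∈ P → y ∈ P) ∧
  (∀ (x : C) (n : ℤ), x ∈ P → (shiftFunctor C n).obj x ∈ P) ∧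
  (∀ T : Triangle C, T ∈ (distTriang C) → T.obj₁ ∈ P → T.obj₂ ∈ P → T.obj₃ ∈ P) ∧
  (∀ x y : C, (∃ (i : x ⟶ y) (r : y ⟶ x), i ≫ r = 𝟙 x) → y ∈ P → x ∈ P) ∧
  (∀ (x : C) ⦃y : C⦄, y ∈ P → (x ⊗ y) ∈ P)

/-- A prime thick ⊗-ideal. -/
def IsPrimeThickTensorIdeal (P : Set C) : Prop :=
  IsThickTensorIdeal P ∧ (∃ x : C, x ∉ P) ∧
    ∀ x y : C, (x ⊗ y) ∈ P → x ∈ P ∨ y ∈ P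

end Tri


section Aux

variable {A : Type u} [Category.{v} A] [MonoidalCategory A]

/-- Structural morphism `tpow F b ⊗ tpow F a ⟶ tpow F (a + b)`. -/
def ins (F : A) (a : ℕ) : ∀ b, tpow F b ⊗ tpow F a ⟶ tpow F (a + b)
  | 0 => (λ_ (tpow F a)).hom
  | b + 1 => (α_ F (tpow F b) (tpow F a)).hom ≫ F ◁ ins F a b

instance ins_isIso (F : A) (a : ℕ) : ∀ b, IsIso (ins F a b)
  | 0 => by dsimp [ins]; exact Iso.isIso_hom _
  | b + 1 => by
      have := ins_isIso F a b
      dsimp [ins]; exact IsIso.comp_isIso' (Iso.isIso_hom _) (whiskerLeft_isIso F (ins F a b))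

lemma upow_add {F : A} (f : 𝟙_ A ⟶ F) (a b : ℕ) :
    upow f (a + b) = (λ_ (𝟙_ A)).inv ≫ (upow f b ⊗ₘ upow f a) ≫ ins F a b := by
  induction b with
  | zero =>
      show upow f a = _
      dsimp [upow, ins]
      erw [id_tensorHom, leftUnitor_naturality (upow f a)]
      simp
  | succ b ih =>
      show (λ_ (𝟙_ A)).inv ≫ (f ⊗ₘ upow f (a + b)) = _
      rw [ih]
      dsimp [upow, ins]
      monoidal

lemma preservesFiniteLimits_tpow [Abelian A] (F : A)
    (hF : PreservesFiniteLimits (tensorLeft F)) :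
    ∀ n, PreservesFiniteLimits (tensorLeft (tpow F n))
  | 0 => preservesFiniteLimits_of_natIso (leftUnitorNatIso A).symm
  | n + 1 => by
      have h := preservesFiniteLimits_tpow F hF n
      have : PreservesFiniteLimits (tensorLeft (tpow F n) ⋙ tensorLeft F) :=
        comp_preservesFiniteLimits _ _
      exact preservesFiniteLimits_of_natIso (tensorLeftTensor F (tpow F n)).symm

lemma key_vanish [Preadditive A] [MonoidalPreadditive A]
    {Y Z M N : A} (w : 𝟙_ A ⟶ Y) (u : 𝟙_ A ⟶ Z) (g : M ⟶ N) (k : 𝟙_ A ⊗ N ⟶ Y ⊗ M)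
    (hw : w ▷ N = k ≫ Y ◁ g) (hu : u ▷ M = 0) :
    ((λ_ (𝟙_ A)).inv ≫ (w ⊗ₘ u)) ▷ N = 0 := by
  have h1 : (λ_ (𝟙_ A)).inv ≫ (w ⊗ₘ u) = w ≫ (ρ_ Y).inv ≫ Y ◁ u := by
    rw [MonoidalCategory.tensorHom_def, ← Category.assoc, ← Category.assoc]
    congr 1
    rw [unitors_inv_equal, ← rightUnitor_inv_naturality]
  rw [h1]
  rw [comp_whiskerRight, comp_whiskerRight, hw]
  have h2 : Y ◁ g ≫ (ρ_ Y).inv ▷ N = (ρ_ Y).inv ▷ M ≫ (Y ⊗ 𝟙_ A) ◁ g :=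
    whisker_exchange (ρ_ Y).inv g
  have h3 : (Y ⊗ 𝟙_ A) ◁ g ≫ (Y ◁ u) ▷ N = (Y ◁ u) ▷ M ≫ (Y ⊗ Z) ◁ g :=
    whisker_exchange (Y ◁ u) g
  have h4 : (Y ◁ u) ▷ M = 0 := by
    rw [whisker_assoc, hu]
    simp
  simp only [Category.assoc]
  slice_lhs 2 3 => rw [h2]
  slice_lhs 3 4 => rw [h3]
  simp only [h4, zero_comp, comp_zero]

end Aux

/-- With `F` ⊗-flat and `f : 𝟙 ⟶ F`, the class
`B₀ = {M | f^{⊗n} ⊗ id_M = 0 for some n ≥ 1}` is closed under extensions: if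
`0 → M₁ → M₂ → M₃ → 0` is exact with `f^{⊗n₁} ⊗ M₁ = 0` and `f^{⊗n₃} ⊗ M₃ = 0`, then
`f^{⊗(n₁+n₃)} ⊗ M₂ = 0`. -/
theorem stmt4 {A : Type u} [Category.{v} A] [Abelian A] [MonoidalCategory A]
    [SymmetricCategory A] [MonoidalPreadditive A]
    [∀ X : A, PreservesFiniteColimits (tensorLeft X)]
    (F : A) (hF : PreservesFiniteLimits (tensorLeft F)) (f : 𝟙_ A ⟶ F)
    (S : ShortComplex A) (hS : S.ShortExact) (n₁ n₃ : ℕ)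
    (h1 : upow f n₁ ▷ S.X₁ = 0) (h3 : upow f n₃ ▷ S.X₃ = 0) :
    upow f (n₁ + n₃) ▷ S.X₂ = 0 := by
  have hT3 : PreservesFiniteLimits (tensorLeft (tpow F n₃)) :=
    preservesFiniteLimits_tpow F hF n₃
  have hmap : (S.map (tensorLeft (tpow F n₃))).ShortExact :=
    hS.map_of_exact (tensorLeft (tpow F n₃))
  have := hmap.mono_f
  have hzero : (upow f n₃ ▷ S.X₂) ≫ (S.map (tensorLeft (tpow F n₃))).g = 0 := by
    show (upow f n₃ ▷ S.X₂) ≫ (tpow F n₃ ◁ S.g) = 0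
    rw [← whisker_exchange, h3, comp_zero]
  obtain ⟨k, hk⟩ := hmap.exact.lift' (upow f n₃ ▷ S.X₂) hzero
  have hk' : upow f n₃ ▷ S.X₂ = k ≫ tpow F n₃ ◁ S.f := hk.symm
  have h0 := key_vanish (upow f n₃) (upow f n₁) S.f k hk' h1
  rw [comp_whiskerRight] at h0
  rw [upow_add f n₁ n₃]
  simp only [comp_whiskerRight, Category.assoc]
  rw [← Category.assoc, h0, zero_comp]
end Balmer
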